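/- For every integer n ≥ 3 there exists a unitary matrix U = (u_{ij}) ∈ U(n) such that u_{kj} = 0 for all 2 ≤ j ≤ k−1 with 3 ≤ k ≤ n (i.e. the lower-right (n−1)×(n−1) block is upper triangular), and 0 < |u_{ll}| < 1 for 2 ≤ l ≤ n. -/

import Mathlib

open Finset

noncomputable def fent (n i j : ℕ) : ℝ :=
  if j = 0 then (Real.sqrt n)⁻¹
  else if i < j then (Real.sqrt (j*(j+1)))⁻¹
  else if i = j then -(j:ℝ) * (Real.sqrt (j*(j+1)))⁻¹
  else 0

lemma fent_col0 (n i : ℕ) : fent n i 0 = (Real.sqrt n)⁻¹ := if_pos rfl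

lemma fent_lt (n i j : ℕ) (hj : j ≠ 0) (h : i < j) :
    fent n i j = (Real.sqrt (j*(j+1)))⁻¹ := by
  rw [fent, if_neg hj, if_pos h]

lemma fent_diag (n j : ℕ) (hj : j ≠ 0) :
    fent n j j = -(j:ℝ) * (Real.sqrt (j*(j+1)))⁻¹ := by
  rw [fent, if_neg hj, if_neg (lt_irrefl j), if_pos rfl]

lemma fent_zero_of_gt (n i j : ℕ) (hj : j ≠ 0) (h : j < i) : fent n i j = 0 := by
  rw [fent, if_neg hj, if_neg (by omega), if_neg (by omega)]

lemma sqrt_pos' (j : ℕ) (hj : j ≠ 0) : 0 < Real.sqrt ((j:ℕ)*(j+1)) := by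
  apply Real.sqrt_pos.mpr
  have : 1 ≤ j := Nat.one_le_iff_ne_zero.mpr hj
  positivity

lemma sumcol (n j : ℕ) (hj : j ≠ 0) : ∑ i ∈ range (j+1), fent n i j = 0 := by
  rw [Finset.sum_range_succ,
    Finset.sum_congr rfl (fun i hi => fent_lt n i j hj (Finset.mem_range.mp hi)),
    Finset.sum_const, fent_diag n j hj, Finset.card_range, nsmul_eq_mul]
  ring

lemma keylem (n : ℕ) (hn : 1 ≤ n) : ∀ j k : ℕ, j ≤ k → k < n →
    ∑ i ∈ range n, fent n i j * fent n i k = if j = k then 1 else 0 := by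
  intro j k hjk hk
  rcases Nat.eq_zero_or_pos k with hk0 | hk1
  · subst hk0
    interval_cases j
    rw [Finset.sum_congr rfl (fun i _ => by
      rw [fent_col0, ← mul_inv, Real.mul_self_sqrt (by positivity)]),
      Finset.sum_const, Finset.card_range, nsmul_eq_mul, if_pos rfl,
      mul_inv_cancel₀ (Nat.cast_pos.mpr hn).ne']
  · have hk0 : k ≠ 0 := by omega
    have hksub : range (k+1) ⊆ range n := Finset.range_subset_range.mpr hk
    rw [← Finset.sum_subset hksub (by
      intro i _ hi
      have hki : k < i := by simp only [Finset.mem_range] at hi; omega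
      rw [fent_zero_of_gt n i k hk0 hki, mul_zero])]
    rw [Finset.sum_range_succ]
    set d : ℝ := Real.sqrt (k*(k+1)) with hd
    have hdm : d * d = (k:ℝ)*((k:ℝ)+1) := by
      rw [hd, Real.mul_self_sqrt (by positivity)]
    have hfk : ∀ i ∈ range k, fent n i k = d⁻¹ :=
      fun i hi => fent_lt n i k hk0 (Finset.mem_range.mp hi)
    have hfkk : fent n k k = -(k:ℝ) * d⁻¹ := fent_diag n k hk0
    rcases Nat.eq_zero_or_pos j with hj0 | hj1
    · subst hj0
      rw [Finset.sum_congr rfl (fun i hi => by rw [hfk i hi, fent_col0]),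
        Finset.sum_const, Finset.card_range, nsmul_eq_mul, hfkk, fent_col0,
        if_neg (by omega)]
      ring
    · have hj0 : j ≠ 0 := by omega
      rcases lt_or_eq_of_le hjk with hjlt | hjeq
      · rw [Finset.sum_congr rfl (fun i hi => by rw [hfk i hi]), ← Finset.sum_mul]
        have hsub2 : range (j+1) ⊆ range k := Finset.range_subset_range.mpr (by omega)
        rw [← Finset.sum_subset hsub2 (fun i _ hi =>
          fent_zero_of_gt n i j hj0 (by simp only [Finset.mem_range] at hi; omega))]
        rw [sumcol n j hj0, zero_mul, fent_zero_of_gt n k j hj0 hjlt, zero_mul, add_zero,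
          if_neg (by omega)]
      · subst hjeq
        rw [Finset.sum_congr rfl (fun i hi => by rw [hfk i hi]),
          Finset.sum_const, Finset.card_range, nsmul_eq_mul, hfkk, if_pos rfl]
        have hdpos : 0 < d := sqrt_pos' j hk0
        have hne : ((j:ℝ)*((j:ℝ)+1)) ≠ 0 := by
          have : (0:ℝ) < j := by exact_mod_cast hk1
          positivity
        calc (j:ℝ) * (d⁻¹ * d⁻¹) + -(j:ℝ)*d⁻¹ * (-(j:ℝ)*d⁻¹)
            = ((j:ℝ) + (j:ℝ)*(j:ℝ)) * (d*d)⁻¹ := by rw [mul_inv]; ring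
          _ = ((j:ℝ) + (j:ℝ)*(j:ℝ)) * ((j:ℝ)*((j:ℝ)+1))⁻¹ := by rw [hdm]
          _ = 1 := by field_simp; ring

lemma keylem' (n : ℕ) (hn : 1 ≤ n) (j k : ℕ) (hj : j < n) (hk : k < n) :
    ∑ i ∈ range n, fent n i j * fent n i k = if j = k then 1 else 0 := by
  rcases le_total j k with h | h
  · exact keylem n hn j k h hk
  · rw [Finset.sum_congr rfl (fun i _ => mul_comm (fent n i j) (fent n i k)),
      keylem n hn k j h hj]
    simp [eq_comm]

theorem stmt_4 (n : ℕ) (hn : 3 ≤ n) :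
    ∃ U : Matrix (Fin n) (Fin n) ℂ, U ∈ Matrix.unitaryGroup (Fin n) ℂ ∧
      (∀ k j : Fin n, 1 ≤ (j : ℕ) → (j : ℕ) < (k : ℕ) → U k j = 0) ∧
      (∀ l : Fin n, 1 ≤ (l : ℕ) →
        0 < ‖U l l‖ ∧ ‖U l l‖ < 1) := by
  have hn1 : 1 ≤ n := by omega
  refine ⟨Matrix.of fun i j : Fin n => ((fent n i j : ℝ) : ℂ), ?_, ?_, ?_⟩
  · rw [Matrix.mem_unitaryGroup_iff']
    ext j k
    rw [Matrix.mul_apply, Matrix.one_apply]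
    simp only [Matrix.star_apply, Matrix.of_apply, RCLike.star_def, Complex.conj_ofReal]
    have : ∀ i : Fin n, ((fent n i j : ℝ) : ℂ) * ((fent n i k : ℝ) : ℂ)
        = ((fent n i j * fent n i k : ℝ) : ℂ) := fun i => (Complex.ofReal_mul _ _).symm
    rw [Finset.sum_congr rfl (fun i _ => this i), ← Complex.ofReal_sum,
      Fin.sum_univ_eq_sum_range (fun i => fent n i j * fent n i k) n,
      keylem' n hn1 j k j.isLt k.isLt]
    have : (j = k) ↔ ((j:ℕ) = (k:ℕ)) := Fin.val_eq_val j k |>.symm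
    split_ifs with h1 h2 h2 <;> simp_all
  · intro k j hj hjk
    simp only [Matrix.of_apply]
    rw [fent_zero_of_gt n k j (by omega) hjk]
    exact Complex.ofReal_zero
  · intro l hl
    have hl0 : (l:ℕ) ≠ 0 := by omega
    simp only [Matrix.of_apply]
    rw [fent_diag n l hl0, Complex.norm_real, Real.norm_eq_abs]
    have hdpos : 0 < Real.sqrt ((l:ℕ)*((l:ℕ)+1)) := sqrt_pos' (l:ℕ) hl0
    have hlpos : (0:ℝ) < (l:ℕ) := by exact_mod_cast Nat.pos_of_ne_zero hl0
    have habs : |(-((l:ℕ):ℝ) * (Real.sqrt ((l:ℕ)*((l:ℕ)+1)))⁻¹)|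
        = ((l:ℕ):ℝ) * (Real.sqrt ((l:ℕ)*((l:ℕ)+1)))⁻¹ := by
      rw [abs_of_nonpos (by
        apply mul_nonpos_of_nonpos_of_nonneg
        · linarith
        · positivity)]
      ring
    rw [habs]
    constructor
    · positivity
    · rw [mul_inv_lt_iff₀ hdpos, one_mul, Real.lt_sqrt hlpos.le]
      nlinarith
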